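/- There is no twice differentiable function f : [0,∞) → ℝ with f(0) = 1, f'(0) = 1 satisfying f''(t) = f'(t) f(t)² for all t ≥ 0; i.e., any solution of f'' = f' f² with these initial conditions blows up in finite time. -/

import Mathlib

theorem stmt_3 :
    ¬ ∃ f : ℝ → ℝ,
      (∀ t : ℝ, 0 ≤ t → DifferentiableAt ℝ f t ∧ DifferentiableAt ℝ (deriv f) t) ∧
      f 0 = 1 ∧ deriv f 0 = 1 ∧
      ∀ t : ℝ, 0 ≤ t → deriv (deriv f) t = deriv f t * (f t) ^ 2 := by
  rintro ⟨f, hd, hf0, hg0, hode⟩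
  set g := deriv f with hg
  -- Step 1: g > 0 on [0, ∞)
  have hgpos : ∀ t : ℝ, 0 ≤ t → 0 < g t := by
    intro t₀ ht₀
    by_contra hneg
    push_neg at hneg
    set S : Set ℝ := Set.Icc (0:ℝ) t₀ ∩ g ⁻¹' Set.Iic 0 with hS
    have hSne : S.Nonempty := ⟨t₀, ⟨ht₀, le_refl _⟩, hneg⟩
    have hgcont : ContinuousOn g (Set.Icc (0:ℝ) t₀) := fun x hx =>
      ((hd x hx.1).2.continuousAt).continuousWithinAt
    have hSclosed : IsClosed S :=
      hgcont.preimage_isClosed_of_isClosed isClosed_Icc isClosed_Iic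
    have hSbdd : BddBelow S := ⟨0, fun x hx => hx.1.1⟩
    set s := sInf S with hs
    have hsS : s ∈ S := hSclosed.csInf_mem hSne hSbdd
    have hs0 : 0 ≤ s := hsS.1.1
    have hgs : g s ≤ 0 := hsS.2
    have hspos : 0 < s := by
      rcases hs0.lt_or_eq with h | h
      · exact h
      · exfalso; rw [← h] at hgs; rw [hg0] at hgs; linarith
    have hlt : ∀ x : ℝ, 0 ≤ x → x < s → 0 < g x := by
      intro x hx0 hxs
      by_contra hx
      push_neg at hx
      have hxS : x ∈ S := ⟨⟨hx0, hxs.le.trans hsS.1.2⟩, hx⟩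
      exact absurd (csInf_le hSbdd hxS) (not_le.mpr hxs)
    have hmono : MonotoneOn g (Set.Icc 0 s) := by
      apply monotoneOn_of_deriv_nonneg (convex_Icc 0 s)
      · exact fun x hx => ((hd x hx.1).2.continuousAt).continuousWithinAt
      · intro x hx
        rw [interior_Icc] at hx
        exact ((hd x hx.1.le).2).differentiableWithinAt
      · intro x hx
        rw [interior_Icc] at hx
        rw [hode x hx.1.le]
        exact mul_nonneg (hlt x hx.1.le hx.2).le (sq_nonneg _)
    have := hmono ⟨le_refl 0, hs0⟩ ⟨hs0, le_refl s⟩ hs0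
    rw [hg0] at this
    linarith
  -- Step 2: f ≥ 1 on [0, ∞)
  have hf1 : ∀ t : ℝ, 0 ≤ t → 1 ≤ f t := by
    intro t ht
    have hmono : MonotoneOn f (Set.Icc 0 t) := by
      apply monotoneOn_of_deriv_nonneg (convex_Icc 0 t)
      · exact fun x hx => ((hd x hx.1).1.continuousAt).continuousWithinAt
      · intro x hx
        rw [interior_Icc] at hx
        exact ((hd x hx.1.le).1).differentiableWithinAt
      · intro x hx
        rw [interior_Icc] at hx
        exact (hgpos x hx.1.le).le
    have := hmono ⟨le_refl 0, ht⟩ ⟨ht, le_refl t⟩ ht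
    rw [hf0] at this; exact this
  -- Step 3: g t = (f t ^ 3 + 2) / 3 on [0, ∞)
  have hkey : ∀ t : ℝ, 0 ≤ t → g t = (f t ^ 3 + 2) / 3 := by
    intro t ht
    set h : ℝ → ℝ := fun x => g x - f x ^ 3 / 3 with hh
    have hderiv : ∀ x : ℝ, 0 ≤ x → HasDerivAt h 0 x := by
      intro x hx
      have h1 : HasDerivAt g (deriv g x) x := (hd x hx).2.hasDerivAt
      have h2 : HasDerivAt f (g x) x := (hd x hx).1.hasDerivAt
      have h3 : HasDerivAt (fun y => f y ^ 3 / 3) (3 * f x ^ 2 * g x / 3) x := by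
        simpa using (h2.pow 3).div_const 3
      have := h1.sub h3
      have heq : deriv g x - 3 * f x ^ 2 * g x / 3 = 0 := by
        rw [hode x hx]; ring
      rw [heq] at this
      exact this
    have hmono : MonotoneOn h (Set.Icc 0 t) := by
      apply monotoneOn_of_deriv_nonneg (convex_Icc 0 t)
      · exact fun x hx => ((hderiv x hx.1).continuousAt).continuousWithinAt
      · intro x hx
        rw [interior_Icc] at hx
        exact (hderiv x hx.1.le).differentiableAt.differentiableWithinAt
      · intro x hx
        rw [interior_Icc] at hx
        rw [(hderiv x hx.1.le).deriv]
    have hanti : AntitoneOn h (Set.Icc 0 t) := by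
      apply antitoneOn_of_deriv_nonpos (convex_Icc 0 t)
      · exact fun x hx => ((hderiv x hx.1).continuousAt).continuousWithinAt
      · intro x hx
        rw [interior_Icc] at hx
        exact (hderiv x hx.1.le).differentiableAt.differentiableWithinAt
      · intro x hx
        rw [interior_Icc] at hx
        rw [(hderiv x hx.1.le).deriv]
    have h1 := hmono ⟨le_refl 0, ht⟩ ⟨ht, le_refl t⟩ ht
    have h2 := hanti ⟨le_refl 0, ht⟩ ⟨ht, le_refl t⟩ ht
    have heq : h t = h 0 := le_antisymm h2 h1
    have : g t - f t ^ 3 / 3 = g 0 - f 0 ^ 3 / 3 := heq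
    rw [hg0, hf0] at this
    field_simp at this ⊢
    linarith
  -- Step 4: blowup via v t = -1/(2 f t ^ 2) - t / 3
  set v : ℝ → ℝ := fun t => -(1 / 2) * (f t ^ 2)⁻¹ - t / 3 with hv
  have hvd : ∀ x : ℝ, 0 ≤ x →
      HasDerivAt v (-(1 / 2) * (-(2 * f x * g x) / (f x ^ 2) ^ 2) - 1 / 3) x := by
    intro x hx
    have h2 : HasDerivAt f (g x) x := (hd x hx).1.hasDerivAt
    have hfx : f x ^ 2 ≠ 0 := by
      have := hf1 x hx; positivity
    have h3 : HasDerivAt (fun y => (f y ^ 2)⁻¹) (-(2 * f x * g x) / (f x ^ 2) ^ 2) x := by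
      have := (h2.pow 2).inv hfx
      have e : (fun y => (f y ^ 2)⁻¹) = (f ^ 2)⁻¹ := by funext y; simp
      rw [e]
      exact this.congr_deriv (by simp only [Pi.pow_apply]; norm_num)
    exact (h3.const_mul (-(1/2) : ℝ)).sub ((hasDerivAt_id x).div_const 3)
  have hmono : MonotoneOn v (Set.Icc (0:ℝ) 2) := by
    apply monotoneOn_of_deriv_nonneg (convex_Icc 0 2)
    · exact fun x hx => ((hvd x hx.1).continuousAt).continuousWithinAt
    · intro x hx
      rw [interior_Icc] at hx
      exact (hvd x hx.1.le).differentiableAt.differentiableWithinAt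
    · intro x hx
      rw [interior_Icc] at hx
      rw [(hvd x hx.1.le).deriv]
      have ha : 1 ≤ f x := hf1 x hx.1.le
      have hgx : g x = (f x ^ 3 + 2) / 3 := hkey x hx.1.le
      rw [hgx]
      have hfx : (0:ℝ) < f x := lt_of_lt_of_le one_pos ha
      have key : -(1/2) * (-(2 * f x * ((f x ^ 3 + 2) / 3)) / (f x ^ 2) ^ 2) - 1/3
          = 2 / (3 * f x ^ 3) := by
        field_simp
        ring
      rw [key]
      positivity
  have h02 := hmono (Set.left_mem_Icc.mpr (by norm_num)) (Set.right_mem_Icc.mpr (by norm_num))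
    (by norm_num)
  have hv0 : v 0 = -(1/2) := by
    simp [hv, hf0]
  have hv2 : v 2 ≤ -(2/3) := by
    have h1 : 1 ≤ f 2 := hf1 2 (by norm_num)
    have h2 : (0:ℝ) < (f 2 ^ 2)⁻¹ := by positivity
    have : v 2 = -(1/2) * (f 2 ^ 2)⁻¹ - 2/3 := rfl
    rw [this]
    nlinarith
  rw [hv0] at h02
  linarith
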